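/- For an even positive integer 2m and positive integer D, the numerator of ζ_D(1−2m) (a rational number) has absolute value at most e^{C·m(log m + log D)} for some absolute constant C; equivalently, its bit-size is O(m(log m + log D)). -/

import Mathlib

open Finset Nat

private def IntS : Subring ℚ := (Int.castRingHom ℚ).range

private lemma natCast_mem_IntS (k : ℕ) : ((k : ℚ)) ∈ IntS := ⟨(k : ℤ), by simp⟩

private lemma bern'_aux : ∀ n : ℕ, |bernoulli' n| ≤ 2 ^ n * n ! ∧
    ((n + 1)! : ℚ) * bernoulli' n ∈ IntS := by
  intro n
  induction n using Nat.strong_induction_on with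
  | _ n ih =>
  have hterm : ∀ k ∈ range n, |(n.choose k : ℚ) / ((n : ℚ) - k + 1) * bernoulli' k|
      ≤ (n ! : ℚ) / 2 * 2 ^ k := by
    intro k hk
    have hkn : k < n := mem_range.mp hk
    have h1 : (n.choose k : ℚ) * k ! ≤ (n ! : ℚ) := by
      have : n.choose k * k ! ≤ n ! := by
        calc n.choose k * k ! ≤ n.choose k * k ! * (n - k)! :=
              Nat.le_mul_of_pos_right _ (Nat.factorial_pos _)
          _ = n ! := Nat.choose_mul_factorial_mul_factorial hkn.le
      exact_mod_cast this
    have h2 : (2 : ℚ) ≤ (n : ℚ) - k + 1 := by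
      have : (k : ℚ) + 1 ≤ n := by exact_mod_cast hkn
      linarith
    have hB := (ih k hkn).1
    have hc : (0:ℚ) ≤ (n.choose k : ℚ) := by positivity
    have hd : (0:ℚ) < (n : ℚ) - k + 1 := by linarith
    have hf : (0:ℚ) < (k ! : ℚ) := by positivity
    have h2k : (0:ℚ) < (2:ℚ)^k := by positivity
    have hBnn : (0:ℚ) ≤ |bernoulli' k| := abs_nonneg _
    rw [abs_mul, abs_div, abs_of_nonneg hc, abs_of_pos hd, div_mul_eq_mul_div,
      div_le_iff₀ hd]
    have e1 : (n.choose k : ℚ) * |bernoulli' k| ≤ (n.choose k : ℚ) * (2 ^ k * k !) :=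
      mul_le_mul_of_nonneg_left hB hc
    nlinarith [mul_le_mul_of_nonneg_left h1 h2k.le,
      mul_le_mul_of_nonneg_left h2 (by positivity : (0:ℚ) ≤ (n ! : ℚ)/2 * 2 ^ k)]
  constructor
  · rw [bernoulli'_def]
    have hsum : |∑ k ∈ range n, (n.choose k : ℚ) / ((n : ℚ) - k + 1) * bernoulli' k|
        ≤ (n ! : ℚ) / 2 * (2 ^ n - 1) := by
      calc |∑ k ∈ range n, (n.choose k : ℚ) / ((n : ℚ) - k + 1) * bernoulli' k|
          ≤ ∑ k ∈ range n, |(n.choose k : ℚ) / ((n : ℚ) - k + 1) * bernoulli' k| :=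
            Finset.abs_sum_le_sum_abs _ _
        _ ≤ ∑ k ∈ range n, (n ! : ℚ) / 2 * 2 ^ k := Finset.sum_le_sum hterm
        _ = (n ! : ℚ) / 2 * (2 ^ n - 1) := by
            rw [← Finset.mul_sum, geom_sum_eq (by norm_num : (2:ℚ) ≠ 1)]
            norm_num
    have h1 : (1:ℚ) ≤ (n ! : ℚ) := by exact_mod_cast Nat.one_le_iff_ne_zero.mpr n.factorial_ne_zero
    have h2 : (1:ℚ) ≤ (2:ℚ) ^ n := one_le_pow₀ (by norm_num)
    calc |1 - ∑ k ∈ range n, (n.choose k : ℚ) / ((n : ℚ) - k + 1) * bernoulli' k|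
        ≤ 1 + |∑ k ∈ range n, (n.choose k : ℚ) / ((n : ℚ) - k + 1) * bernoulli' k| := by
          rw [sub_eq_add_neg]
          refine (abs_add_le _ _).trans ?_
          rw [abs_neg, abs_one]
      _ ≤ 1 + (n ! : ℚ) / 2 * (2 ^ n - 1) := by linarith
      _ ≤ 2 ^ n * n ! := by nlinarith
  · rw [bernoulli'_def, mul_sub, mul_one]
    refine Subring.sub_mem _ (natCast_mem_IntS _) ?_
    rw [Finset.mul_sum]
    refine Subring.sum_mem _ fun k hk => ?_
    have hkn : k < n := mem_range.mp hk
    have hdvd : (k+1)! ∣ n ! := Nat.factorial_dvd_factorial (by omega)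
    have natkey : (n+1)! * n.choose k = n ! / (k+1)! * (n+1).choose k * (k+1)! * ((n - k) + 1) := by
      rw [mul_right_comm (n ! / (k+1)!) ((n+1).choose k), Nat.div_mul_cancel hdvd]
      have h3 : n + 1 - k = (n - k) + 1 := by omega
      calc (n+1)! * n.choose k = n ! * (n.choose k * (n + 1)) := by
            rw [Nat.factorial_succ]; ring
        _ = n ! * ((n+1).choose k * (n + 1 - k)) := by rw [Nat.choose_mul_succ_eq]
        _ = n ! * (n+1).choose k * ((n - k) + 1) := by rw [h3]; ring
    have hcast : ((n + 1)! : ℚ) * (n.choose k : ℚ)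
        = ((n ! / (k+1)! * (n+1).choose k : ℕ) : ℚ) * ((k+1)! : ℚ) * ((n : ℚ) - k + 1) := by
      have := congrArg (fun x : ℕ => (x : ℚ)) natkey
      push_cast [Nat.cast_sub hkn.le] at this
      push_cast
      linarith [this]
    have hne : (n : ℚ) - k + 1 ≠ 0 := by
      have : (k : ℚ) + 1 ≤ n := by exact_mod_cast hkn
      intro h; linarith [h]
    have key : ((n+1)! : ℚ) * ((n.choose k : ℚ) / ((n : ℚ) - k + 1) * bernoulli' k)
        = ((n ! / (k+1)! * (n+1).choose k : ℕ) : ℚ) * (((k+1)! : ℚ) * bernoulli' k) := by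
      rw [div_mul_eq_mul_div, ← mul_div_assoc, div_eq_iff hne]
      linear_combination bernoulli' k * hcast
    rw [key]
    exact Subring.mul_mem _ (natCast_mem_IntS _) (ih k hkn).2

private lemma bern_abs_le (n : ℕ) : |bernoulli n| ≤ 2 ^ n * n ! := by
  rw [bernoulli, abs_mul, abs_pow, abs_neg, abs_one, one_pow, one_mul]
  exact (bern'_aux n).1

private lemma bern_mem (n : ℕ) : ((n + 1)! : ℚ) * bernoulli n ∈ IntS := by
  rw [bernoulli, mul_comm ((-1 : ℚ) ^ n), ← mul_assoc]
  exact Subring.mul_mem _ (bern'_aux n).2 ⟨(-1)^n, by simp⟩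


private lemma bernPoly_eval_abs_le (n : ℕ) {x : ℚ} (hx0 : 0 ≤ x) (hx1 : x ≤ 1) :
    |(Polynomial.bernoulli n).eval x| ≤ (n + 1) * (2 ^ n * n !) := by
  rw [Polynomial.bernoulli, Polynomial.eval_finset_sum]
  simp only [Polynomial.eval_monomial]
  calc |∑ i ∈ range (n + 1), bernoulli i * (n.choose i : ℚ) * x ^ (n - i)|
      ≤ ∑ i ∈ range (n + 1), |bernoulli i * (n.choose i : ℚ) * x ^ (n - i)| :=
        Finset.abs_sum_le_sum_abs _ _
    _ ≤ ∑ _i ∈ range (n + 1), ((2:ℚ) ^ n * n !) := by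
        refine Finset.sum_le_sum fun i hi => ?_
        have hin' : i ≤ n := Nat.lt_succ_iff.mp (mem_range.mp hi)
        have h1 : |x ^ (n - i)| ≤ 1 := by
          rw [abs_pow, abs_of_nonneg hx0]; exact pow_le_one₀ hx0 hx1
        have h2 : (2:ℚ) ^ i * i ! * (n.choose i : ℚ) ≤ 2 ^ n * n ! := by
          have hnat : 2 ^ i * (i ! * n.choose i) ≤ 2 ^ n * n ! := by
            have ha : i ! * n.choose i ≤ n ! := by
              calc i ! * n.choose i = n.choose i * i ! := Nat.mul_comm _ _
                _ ≤ n.choose i * i ! * (n - i)! :=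
                  Nat.le_mul_of_pos_right _ (Nat.factorial_pos _)
                _ = n ! := Nat.choose_mul_factorial_mul_factorial hin'
            exact Nat.mul_le_mul (Nat.pow_le_pow_right (by norm_num) hin') ha
          calc (2:ℚ) ^ i * i ! * (n.choose i : ℚ) = ((2 ^ i * (i ! * n.choose i) : ℕ) : ℚ) := by
                push_cast; ring
            _ ≤ ((2 ^ n * n ! : ℕ) : ℚ) := by exact_mod_cast hnat
            _ = (2:ℚ) ^ n * n ! := by push_cast; ring
        rw [abs_mul, abs_mul]
        have hb := bern_abs_le i
        have hc : |(n.choose i : ℚ)| = (n.choose i : ℚ) := abs_of_nonneg (by positivity)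
        rw [hc]
        calc |bernoulli i| * (n.choose i : ℚ) * |x ^ (n - i)|
            ≤ (2 ^ i * i !) * (n.choose i : ℚ) * 1 := by
              refine mul_le_mul (mul_le_mul hb le_rfl (by positivity) (by positivity)) h1
                (abs_nonneg _) (by positivity)
          _ ≤ 2 ^ n * n ! := by rw [mul_one]; linarith [h2]
    _ = (n + 1) * (2 ^ n * n !) := by
        rw [Finset.sum_const, Finset.card_range, nsmul_eq_mul]; push_cast; ring

private lemma bernPoly_int (n j d : ℕ) (hd : d ≠ 0) :
    (d:ℚ) ^ n * (((n + 1)! : ℚ) * (Polynomial.bernoulli n).eval ((j : ℚ) / d)) ∈ IntS := by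
  rw [Polynomial.bernoulli, Polynomial.eval_finset_sum]
  simp only [Polynomial.eval_monomial]
  rw [Finset.mul_sum, Finset.mul_sum]
  refine Subring.sum_mem _ fun i hi => ?_
  have hin : i ≤ n := Nat.lt_succ_iff.mp (mem_range.mp hi)
  have hdvd : (i + 1)! ∣ (n + 1)! := Nat.factorial_dvd_factorial (by omega)
  have hdq : (d:ℚ) ≠ 0 := Nat.cast_ne_zero.mpr hd
  have key : (d:ℚ) ^ n * (((n + 1)! : ℚ) * (bernoulli i * (n.choose i : ℚ) * ((j:ℚ)/d) ^ (n - i)))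
      = (((n + 1)! / (i + 1)! * n.choose i * j ^ (n - i) * d ^ i : ℕ) : ℚ)
        * (((i + 1)! : ℚ) * bernoulli i) := by
    have h1 : ((n + 1)! : ℚ) = (((n + 1)! / (i + 1)! : ℕ) : ℚ) * ((i + 1)! : ℚ) := by
      exact_mod_cast (Nat.div_mul_cancel hdvd).symm
    have h2 : (d:ℚ) ^ n = (d:ℚ) ^ (n - i) * (d:ℚ) ^ i := by
      rw [← pow_add]; congr 1; omega
    have h3 : ((j:ℚ)/d) ^ (n - i) * (d:ℚ) ^ (n - i) = (j:ℚ) ^ (n - i) := by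
      rw [div_pow, div_mul_cancel₀]
      positivity
    rw [h1, h2]
    push_cast
    linear_combination (((n + 1)! / (i + 1)! : ℕ) : ℚ) * ((i + 1)! : ℚ) * bernoulli i
      * (n.choose i : ℚ) * (d:ℚ) ^ i * h3
  rw [key]
  exact Subring.mul_mem _ (natCast_mem_IntS _) (bern_mem i)



set_option maxHeartbeats 1000000 in
/-- For an even positive integer `2m` and a positive integer `D`, the numerator of the
rational number `ζ_D(1−2m) = ζ(1−2m)·L(1−2m, χ)` (where `χ` is the quadratic character
mod `D` attached to the real quadratic field of discriminant `D`) has absolute value at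
most `e^{C·m(log m + log D)}` for some absolute constant `C > 0`; equivalently its
bit-size is `O(m(log m + log D))`. -/
theorem numerator_dedekindZeta_value_bound :
    ∃ C : ℝ, 0 < C ∧
      ∀ (D : ℕ) [NeZero D] (χ : DirichletCharacter ℂ D), χ ^ 2 = 1 →
        ∀ m : ℕ, 1 ≤ m → ∀ q : ℚ,
          (q : ℂ) = riemannZeta (1 - 2 * (m : ℂ)) *
              DirichletCharacter.LFunction χ (1 - 2 * (m : ℂ)) →
            |(q.num : ℝ)| ≤ Real.exp (C * m * (Real.log m + Real.log D)) := by
  classical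
  refine ⟨100, by norm_num, ?_⟩
  intro D _ χ hχ2 m hm q hq
  have hD1 : 1 ≤ D := Nat.one_le_iff_ne_zero.mpr (NeZero.ne D)
  by_cases hspec : m = 1 ∧ D = 1
  · obtain ⟨hm1, hD1'⟩ := hspec
    subst hm1; subst hD1'
    rw [DirichletCharacter.LFunction_modOne_eq] at hq
    have h1 : (1 : ℂ) - 2 * ((1:ℕ) : ℂ) = -((1:ℕ) : ℂ) := by norm_num
    have hb2 : bernoulli 2 = 1/6 := by
      rw [bernoulli_eq_bernoulli'_of_ne_one (by norm_num), bernoulli'_two]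
    rw [h1, riemannZeta_neg_nat_eq_bernoulli] at hq
    norm_num [hb2] at hq
    have hq' : q = 1/144 := by
      have : (q : ℂ) = ((1/144 : ℚ) : ℂ) := by rw [hq]; push_cast; norm_num
      exact_mod_cast this
    rw [hq']
    have hnum : (1/144 : ℚ).num = 1 := by norm_num
    rw [hnum]
    norm_num
  · -- main case
    obtain ⟨n, hn⟩ : ∃ k, k = 2 * m := ⟨_, rfl⟩
    have hn2 : 2 ≤ n := by omega
    have hn0 : (n:ℚ) ≠ 0 := by positivity
    have hDq0 : (0:ℚ) < (D:ℚ) := by exact_mod_cast hD1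
    have hpm : χ (-1) = 1 ∨ χ (-1) = -1 := by
      apply mul_self_eq_one_iff.mp
      rw [← map_mul]
      norm_num
    rcases hpm with hev | hod
    swap
    · -- odd character : L-value vanishes
      have hΦ : Function.Odd (⇑χ) := by
        intro j
        rw [show -j = -1 * j by ring, map_mul, hod]
        ring
      have hs : (1 : ℂ) - 2 * (m:ℂ) = -(2 * ((m - 1 : ℕ) : ℂ)) - 1 := by
        push_cast [Nat.cast_sub hm]
        ring
      have hL : DirichletCharacter.LFunction χ (1 - 2 * (m:ℂ)) = 0 := by
        rw [hs]
        exact ZMod.LFunction_neg_two_mul_nat_sub_one hΦ (m - 1)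
      rw [hL, mul_zero] at hq
      have hq0 : q = 0 := by exact_mod_cast hq
      rw [hq0]
      simp only [Rat.num_zero, Int.cast_zero, abs_zero]
      positivity
    · -- even character
      have hΦ : Function.Even (⇑χ) := by
        intro j
        rw [show -j = -1 * j by ring, map_mul, hev, one_mul]
      have hval : ∀ j : ZMod D, χ j = 1 ∨ χ j = -1 ∨ χ j = 0 := by
        intro j
        by_cases hu : IsUnit j
        · have h1j : (1 : DirichletCharacter ℂ D) j = 1 := by
            conv_lhs => rw [← hu.unit_spec]
            exact MulChar.one_apply_coe hu.unit
          have h2 : χ j * χ j = 1 := by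
            have h := congrArg (fun ψ : DirichletCharacter ℂ D => ψ j) hχ2
            simp only [pow_two, MulChar.mul_apply] at h
            rw [h, h1j]
          rcases mul_self_eq_one_iff.mp h2 with h | h
          · exact Or.inl h
          · exact Or.inr (Or.inl h)
        · exact Or.inr (Or.inr (χ.map_nonunit hu))
      set c : ZMod D → ℚ := fun j => if χ j = 1 then 1 else if χ j = -1 then -1 else 0 with hcdef
      have hcval : ∀ j, (c j = 1 ∧ χ j = 1) ∨ (c j = -1 ∧ χ j = -1) ∨ (c j = 0 ∧ χ j = 0) := by
        intro j
        rcases hval j with h | h | h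
        · refine Or.inl ⟨?_, h⟩
          show (if χ j = 1 then (1:ℚ) else if χ j = -1 then -1 else 0) = 1
          rw [if_pos h]
        · refine Or.inr (Or.inl ⟨?_, h⟩)
          show (if χ j = 1 then (1:ℚ) else if χ j = -1 then -1 else 0) = -1
          rw [if_neg (by rw [h]; norm_num), if_pos h]
        · refine Or.inr (Or.inr ⟨?_, h⟩)
          show (if χ j = 1 then (1:ℚ) else if χ j = -1 then -1 else 0) = 0
          rw [if_neg (by rw [h]; norm_num), if_neg (by rw [h]; norm_num)]
      have hc : ∀ j, ((c j : ℚ) : ℂ) = χ j := by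
        intro j
        rcases hcval j with ⟨h1, h2⟩ | ⟨h1, h2⟩ | ⟨h1, h2⟩ <;> rw [h1, h2] <;> norm_num
      have hcabs : ∀ j, |c j| ≤ 1 := by
        intro j
        rcases hcval j with ⟨h1, _⟩ | ⟨h1, _⟩ | ⟨h1, _⟩ <;> rw [h1] <;> norm_num
      have hcmem : ∀ j, c j ∈ IntS := by
        intro j
        rcases hcval j with ⟨h1, _⟩ | ⟨h1, _⟩ | ⟨h1, _⟩ <;> rw [h1]
        · exact Subring.one_mem _
        · exact Subring.neg_mem _ (Subring.one_mem _)
        · exact Subring.zero_mem _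
      -- the Hurwitz zeta values
      have hHZ : ∀ j : ZMod D, HurwitzZeta.hurwitzZetaEven (ZMod.toAddCircle j) (1 - 2 * (m:ℂ))
          = (((-1/(n:ℚ)) * (Polynomial.bernoulli n).eval ((j.val : ℚ)/D) : ℚ) : ℂ) := by
        intro j
        rw [hn]
        rw [ZMod.toAddCircle_apply]
        have hx : ((j.val : ℝ)/D) ∈ Set.Icc (0:ℝ) 1 := by
          constructor
          · positivity
          · rw [div_le_one (by exact_mod_cast hD1)]
            exact_mod_cast (ZMod.val_lt j).le
        rw [HurwitzZeta.hurwitzZetaEven_one_sub_two_mul_nat (by omega : m ≠ 0) hx]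
        have hz : (((j.val : ℝ)/D : ℝ) : ℂ) = algebraMap ℚ ℂ ((j.val : ℚ)/D) := by
          rw [eq_ratCast]
          push_cast
          ring
        rw [hz, Polynomial.eval_map, Polynomial.eval₂_at_apply, eq_ratCast]
        push_cast
        ring
      -- the L-function value as a rational
      have hLrat : DirichletCharacter.LFunction χ (1 - 2 * (m:ℂ))
          = ((((D:ℚ)^(n-1) * ∑ j : ZMod D,
              c j * ((-1/(n:ℚ)) * (Polynomial.bernoulli n).eval ((j.val : ℚ)/D)) : ℚ)) : ℂ) := by
        have h0 : DirichletCharacter.LFunction χ (1 - 2 * (m:ℂ))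
            = ZMod.LFunction (⇑χ) (1 - 2 * (m:ℂ)) := rfl
        rw [h0, ZMod.LFunction_def_even hΦ]
        have hD' : (D:ℂ) ^ (-(1 - 2 * (m:ℂ))) = (((D:ℚ) ^ (n-1) : ℚ) : ℂ) := by
          have h1 : -(1 - 2 * (m:ℂ)) = ((n - 1 : ℕ) : ℂ) := by
            have h2 : n - 1 = 2 * m - 1 := by omega
            rw [h2]
            push_cast [Nat.cast_sub (show 1 ≤ 2 * m by omega)]
            ring
          rw [h1, Complex.cpow_natCast]
          push_cast
          ring
        have hsum : ∑ j : ZMod D, χ j * HurwitzZeta.hurwitzZetaEven (ZMod.toAddCircle j) (1 - 2*(m:ℂ))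
            = ∑ j : ZMod D,
              (((c j * ((-1/(n:ℚ)) * (Polynomial.bernoulli n).eval ((j.val : ℚ)/D))) : ℚ) : ℂ) := by
          refine Finset.sum_congr rfl fun j _ => ?_
          rw [hHZ j, ← hc j]
          push_cast
          ring
        rw [hsum, hD', ← Rat.cast_sum, ← Rat.cast_mul]
      -- the zeta value as a rational
      have hZrat : riemannZeta (1 - 2 * (m:ℂ)) = (((-(bernoulli n)/(n:ℚ)) : ℚ) : ℂ) := by
        have h1 : (1 : ℂ) - 2 * (m:ℂ) = -((n - 1 : ℕ) : ℂ) := by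
          have h2 : n - 1 = 2 * m - 1 := by omega
          rw [h2]
          push_cast [Nat.cast_sub (show 1 ≤ 2 * m by omega)]
          ring
        rw [h1, riemannZeta_neg_nat_eq_bernoulli]
        have h2 : n - 1 + 1 = n := by omega
        rw [h2]
        have h3 : (-1 : ℂ)^(n-1) = -1 := Odd.neg_one_pow ⟨m - 1, by omega⟩
        rw [h3]
        push_cast [Nat.cast_sub (show 1 ≤ n by omega)]
        ring
      -- q as a rational expression
      have hqr : q = (-(bernoulli n)/(n:ℚ)) * ((D:ℚ)^(n-1) * ∑ j : ZMod D,
          c j * ((-1/(n:ℚ)) * (Polynomial.bernoulli n).eval ((j.val : ℚ)/D))) := by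
        have : (q:ℂ) = (((-(bernoulli n)/(n:ℚ)) * ((D:ℚ)^(n-1) * ∑ j : ZMod D,
            c j * ((-1/(n:ℚ)) * (Polynomial.bernoulli n).eval ((j.val : ℚ)/D))) : ℚ) : ℂ) := by
          rw [hq, hZrat, hLrat, ← Rat.cast_mul]
        exact_mod_cast this
      set U : ℚ := ∑ j : ZMod D, c j * (Polynomial.bernoulli n).eval ((j.val : ℚ)/D) with hU
      have hSig0 : ∑ j : ZMod D, c j * ((-1/(n:ℚ)) * (Polynomial.bernoulli n).eval ((j.val : ℚ)/D))
          = (-1/(n:ℚ)) * U := by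
        rw [hU, Finset.mul_sum]
        exact Finset.sum_congr rfl fun j _ => by ring
      rw [hSig0] at hqr
      -- bound on |U|
      have hUabs : |U| ≤ (D:ℚ) * (((n:ℚ)+1) * (2^n * n !)) := by
        rw [hU]
        calc |∑ j : ZMod D, c j * (Polynomial.bernoulli n).eval ((j.val : ℚ)/D)|
            ≤ ∑ j : ZMod D, |c j * (Polynomial.bernoulli n).eval ((j.val : ℚ)/D)| :=
              Finset.abs_sum_le_sum_abs _ _
          _ ≤ ∑ _j : ZMod D, ((n:ℚ)+1) * (2^n * n !) := by
              refine Finset.sum_le_sum fun j _ => ?_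
              rw [abs_mul]
              have h1 := hcabs j
              have h2 : |(Polynomial.bernoulli n).eval ((j.val : ℚ)/D)|
                  ≤ ((n:ℚ)+1) * (2^n * n !) := by
                have := bernPoly_eval_abs_le n (x := (j.val : ℚ)/D) (by positivity)
                  (by rw [div_le_one hDq0]; exact_mod_cast (ZMod.val_lt j).le)
                calc |(Polynomial.bernoulli n).eval ((j.val : ℚ)/D)|
                    ≤ ((n:ℕ) + 1 : ℚ) * (2^n * n !) := by exact_mod_cast this
                  _ = ((n:ℚ)+1) * (2^n * n !) := by push_cast; ring
              calc |c j| * |(Polynomial.bernoulli n).eval ((j.val : ℚ)/D)|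
                  ≤ 1 * (((n:ℚ)+1) * (2^n * n !)) :=
                    mul_le_mul h1 h2 (abs_nonneg _) zero_le_one
                _ = ((n:ℚ)+1) * (2^n * n !) := one_mul _
          _ = (D:ℚ) * (((n:ℚ)+1) * (2^n * n !)) := by
              rw [Finset.sum_const, Finset.card_univ, ZMod.card, nsmul_eq_mul]
      -- bound on |q|
      have hq_abs : |q| ≤ (2^n * (n ! : ℚ)) * ((D:ℚ)^(n-1) * (1 * ((D:ℚ) * (((n:ℚ)+1) * (2^n * n !))))) := by
        rw [hqr, abs_mul, abs_mul, abs_mul]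
        have h1 : |(-(bernoulli n)/(n:ℚ))| ≤ 2^n * (n ! : ℚ) := by
          rw [abs_div, abs_neg]
          have hnn : |(n:ℚ)| = (n:ℚ) := abs_of_pos (by positivity)
          rw [hnn]
          calc |bernoulli n| / (n:ℚ) ≤ |bernoulli n| / 1 := by
                apply div_le_div_of_nonneg_left (abs_nonneg _) one_pos
                exact_mod_cast (show 1 ≤ n by omega)
            _ = |bernoulli n| := div_one _
            _ ≤ 2^n * n ! := bern_abs_le n
        have h2 : |(D:ℚ)^(n-1)| = (D:ℚ)^(n-1) := abs_of_pos (by positivity)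
        have h3 : |(-1/(n:ℚ))| ≤ 1 := by
          rw [abs_div, abs_neg, abs_one]
          have hnn : |(n:ℚ)| = (n:ℚ) := abs_of_pos (by positivity)
          rw [hnn, div_le_one (by positivity)]
          exact_mod_cast (show 1 ≤ n by omega)
        rw [h2]
        refine mul_le_mul h1 ?_ (by positivity) (by positivity)
        refine mul_le_mul_of_nonneg_left ?_ (by positivity)
        exact mul_le_mul h3 hUabs (abs_nonneg _) zero_le_one
      -- integrality of the denominator
      set Fq : ℚ := (((n+1)! : ℕ) : ℚ) with hFq
      set b : ℕ := n^2 * D * ((n+1)!)^2 with hb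
      have hbpos : 0 < b := by positivity
      have hbint : q * (b:ℚ) ∈ IntS := by
        have hT : (∑ j : ZMod D, c j * (-((D:ℚ)^n * (Fq * (Polynomial.bernoulli n).eval ((j.val : ℚ)/D))))) ∈ IntS := by
          refine Subring.sum_mem _ fun j _ => ?_
          refine Subring.mul_mem _ (hcmem j) (Subring.neg_mem _ ?_)
          exact bernPoly_int n j.val D (by omega)
        have hTU : ∑ j : ZMod D, c j * (-((D:ℚ)^n * (Fq * (Polynomial.bernoulli n).eval ((j.val : ℚ)/D))))
            = -((D:ℚ)^n * Fq) * U := by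
          rw [hU, Finset.mul_sum]
          exact Finset.sum_congr rfl fun j _ => by ring
        have hmem := Subring.mul_mem _ (Subring.neg_mem _ (bern_mem n)) hT
        have he : q * (b:ℚ) = (-(((n+1)! : ℚ) * bernoulli n)) *
            (∑ j : ZMod D, c j * (-((D:ℚ)^n * (Fq * (Polynomial.bernoulli n).eval ((j.val : ℚ)/D))))) := by
          rw [hTU, hqr, hb]
          have hDpow : (D:ℚ)^(n-1) * (D:ℚ) = (D:ℚ)^n := by
            rw [← pow_succ]
            congr 1
            omega
          rw [hFq]
          push_cast
          rw [← hDpow]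
          field_simp
        rw [he]
        exact hmem
      -- bound on denominator
      obtain ⟨z, hz⟩ := hbint
      have hzq : (z : ℚ) = q * b := hz
      have hden : (q.den : ℚ) ≤ (b : ℚ) := by
        have hq' : q = (z : ℚ) / (b : ℚ) := by
          rw [hzq]
          field_simp
        have hdvd : ((q.den : ℤ)) ∣ (b : ℤ) := by
          have h := Rat.den_dvd z (b : ℤ)
          rw [Rat.divInt_eq_div] at h
          rw [hq']
          convert h using 3
          simp
        have := Int.le_of_dvd (by exact_mod_cast hbpos) hdvd
        exact_mod_cast this
      -- numerator bound
      have hnum_eq : |(q.num : ℚ)| = |q| * (q.den : ℚ) := by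
        have h := Rat.num_div_den q
        have hden0 : ((q.den : ℚ)) ≠ 0 := by
          exact_mod_cast q.den_nz
        rw [div_eq_iff hden0] at h
        rw [h, abs_mul, abs_of_nonneg (by positivity : (0:ℚ) ≤ (q.den:ℚ))]
      have hnum_le : |(q.num : ℚ)| ≤ (4:ℚ)^n * Fq^7 * (D:ℚ)^(n+1) := by
        have hqnn : (0:ℚ) ≤ |q| := abs_nonneg _
        have step1 : |(q.num : ℚ)| ≤
            ((2^n * (n ! : ℚ)) * ((D:ℚ)^(n-1) * (1 * ((D:ℚ) * (((n:ℚ)+1) * (2^n * n !)))))) * (b:ℚ) := by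
          rw [hnum_eq]
          exact mul_le_mul hq_abs hden (by positivity) (by positivity)
        refine step1.trans ?_
        have hDq : (D:ℚ)^(n-1) * (D:ℚ) * (D:ℚ) = (D:ℚ)^(n+1) := by
          rw [← pow_succ, ← pow_succ]
          congr 1
          omega
        have hkey : ((2^n * (n ! : ℚ)) * ((D:ℚ)^(n-1) * (1 * ((D:ℚ) * (((n:ℚ)+1) * (2^n * n !)))))) * (b:ℚ)
            = (2:ℚ)^n * (2:ℚ)^n * ((n ! : ℚ) * ((n:ℚ)+1) * (n ! : ℚ) * ((n:ℚ)*(n:ℚ)) * Fq^2)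
              * ((D:ℚ)^(n-1) * (D:ℚ) * (D:ℚ)) := by
          rw [hb, hFq]
          push_cast
          ring
        rw [hkey, hDq]
        have hF1 : (n ! : ℚ) ≤ Fq := by
          rw [hFq]
          exact_mod_cast Nat.factorial_le (by omega)
        have hF2 : ((n:ℚ)+1) ≤ Fq := by
          rw [hFq]
          exact_mod_cast Nat.self_le_factorial (n+1)
        have hF3 : (n:ℚ) ≤ Fq := le_trans (by linarith) hF2
        have hFnn : (0:ℚ) ≤ Fq := by rw [hFq]; positivity
        calc (2:ℚ)^n * (2:ℚ)^n * ((n ! : ℚ) * ((n:ℚ)+1) * (n ! : ℚ) * ((n:ℚ)*(n:ℚ)) * Fq^2) * (D:ℚ)^(n+1)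
            ≤ (2:ℚ)^n * (2:ℚ)^n * (Fq * Fq * Fq * (Fq*Fq) * Fq^2) * (D:ℚ)^(n+1) := by
              gcongr <;> positivity
          _ = (4:ℚ)^n * Fq^7 * (D:ℚ)^(n+1) := by
              rw [show (4:ℚ)^n = 2^n * 2^n by rw [← mul_pow]; norm_num]
              ring
      -- pass to ℝ and take logs
      have hnumR : |(q.num : ℝ)| ≤ (4:ℝ)^n * (((n+1)! : ℕ) : ℝ)^7 * (D:ℝ)^(n+1) := by
        rw [hFq] at hnum_le
        exact_mod_cast hnum_le
      refine hnumR.trans ?_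
      have hFpos : (0:ℝ) < (((n+1)! : ℕ) : ℝ) := by exact_mod_cast Nat.factorial_pos (n+1)
      have hppos : (0:ℝ) < (4:ℝ)^n * (((n+1)! : ℕ) : ℝ)^7 * (D:ℝ)^(n+1) := by positivity
      rw [← Real.exp_log hppos]
      apply Real.exp_le_exp.mpr
      rw [Real.log_mul (by positivity) (by positivity), Real.log_mul (by positivity) (by positivity),
        Real.log_pow, Real.log_pow, Real.log_pow]
      push_cast
      -- remaining : n * log 4 + 7 * log F + (n+1) * log D ≤ 100 m (log m + log D)
      have hM1 : (1:ℝ) ≤ (m:ℝ) := by exact_mod_cast hm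
      have hM0 : (0:ℝ) ≤ (m:ℝ) := by linarith
      have hDR1 : (1:ℝ) ≤ (D:ℝ) := by exact_mod_cast hD1
      have hL0 : (0:ℝ) ≤ Real.log m := Real.log_nonneg hM1
      have hDl0 : (0:ℝ) ≤ Real.log D := Real.log_nonneg hDR1
      have hS : Real.log 2 ≤ Real.log m + Real.log D := by
        rcases (show 2 ≤ m ∨ 2 ≤ D by omega) with h | h
        · have h1 : Real.log 2 ≤ Real.log m :=
            Real.log_le_log (by norm_num) (by exact_mod_cast h)
          linarith
        · have h1 : Real.log 2 ≤ Real.log D :=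
            Real.log_le_log (by norm_num) (by exact_mod_cast h)
          linarith
      have hl2 : (0.6931471:ℝ) ≤ Real.log 2 := by
        linarith [Real.log_two_gt_d9]
      have hlog4 : Real.log 4 ≤ 1.4 := by
        rw [show (4:ℝ) = 2^2 by norm_num, Real.log_pow]
        push_cast
        nlinarith [Real.log_two_lt_d9]
      have hlogF : Real.log (((n+1)! : ℕ) : ℝ) ≤ ((n:ℝ)+1) * Real.log ((n:ℝ)+1) := by
        have h1 : (((n+1)! : ℕ) : ℝ) ≤ (((n+1)^(n+1) : ℕ) : ℝ) := by
          exact_mod_cast Nat.factorial_le_pow (n+1)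
        calc Real.log (((n+1)! : ℕ) : ℝ) ≤ Real.log (((n+1)^(n+1) : ℕ) : ℝ) :=
              Real.log_le_log (by positivity) h1
          _ = ((n:ℝ)+1) * Real.log ((n:ℝ)+1) := by
              push_cast
              rw [Real.log_pow]
              push_cast
              ring
      have hlogn1 : Real.log ((n:ℝ)+1) ≤ 1.4 + Real.log m := by
        have h1 : ((n:ℝ)+1) ≤ 4 * m := by
          have : (n:ℝ) = 2 * m := by rw [hn]; push_cast; ring
          rw [this]
          linarith
        calc Real.log ((n:ℝ)+1) ≤ Real.log (4 * m) :=
              Real.log_le_log (by positivity) h1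
          _ = Real.log 4 + Real.log m := Real.log_mul (by norm_num) (by positivity)
          _ ≤ 1.4 + Real.log m := by linarith
      have hnR : (n:ℝ) = 2 * m := by rw [hn]; push_cast; ring
      rw [hnR] at hlogF hlogn1 ⊢
      have hstep : (7:ℝ) * Real.log (((n+1)! : ℕ) : ℝ) ≤ 7 * ((2*(m:ℝ)+1) * (1.4 + Real.log m)) := by
        have h2 : (2*(m:ℝ)+1) * Real.log (2*(m:ℝ)+1) ≤ (2*(m:ℝ)+1) * (1.4 + Real.log m) :=
          mul_le_mul_of_nonneg_left hlogn1 (by linarith)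
        linarith [hlogF]
      nlinarith [hstep, mul_le_mul_of_nonneg_left hS hM0,
        mul_nonneg hM0 hL0, mul_nonneg hM0 hDl0,
        mul_nonneg (sub_nonneg.mpr hM1) hL0, mul_nonneg (sub_nonneg.mpr hM1) hDl0,
        mul_le_mul_of_nonneg_left hl2 hM0, mul_le_mul_of_nonneg_left hlog4 hM0]
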